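/- Let n > k ≥ 1 and δ ≥ 1 be integers with δ < k, and set L := ⌊δ/(n−k)⌋. If L ≥ 1, then C((L+1)n − 1, (L+1)(n−k) − 1) ≤ C((L+1)n − 1, n − 2), where C(a,b) denotes the binomial coefficient. -/
import Mathlib

lemma choose_mono_of_le_half {N a b : ℕ} (hab : a ≤ b) (hb : b ≤ N / 2) :
    Nat.choose N a ≤ Nat.choose N b := by
  induction b, hab using Nat.le_induction with
  | base => rfl
  | succ b hab ih =>
    exact (ih (by omega)).trans (Nat.choose_le_succ_of_lt_half_left (by omega))

/-- Let n > k ≥ 1 and δ ≥ 1 with δ < k, and L = ⌊δ/(n−k)⌋. If L ≥ 1,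
then C((L+1)n − 1, (L+1)(n−k) − 1) ≤ C((L+1)n − 1, n − 2). -/
theorem stmt14 (n k δ L : ℕ) (hk : 1 ≤ k) (hkn : k < n) (hδ : 1 ≤ δ) (hδk : δ < k)
    (hL : L = δ / (n - k)) (hL1 : 1 ≤ L) :
    Nat.choose ((L + 1) * n - 1) ((L + 1) * (n - k) - 1) ≤
      Nat.choose ((L + 1) * n - 1) (n - 2) := by
  have h1 : L * (n - k) ≤ δ := by
    rw [hL]; exact Nat.div_mul_le_self δ (n - k)
  have h2 : (L + 1) * (n - k) - 1 ≤ n - 2 := by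
    have : (L + 1) * (n - k) = L * (n - k) + (n - k) := by ring
    omega
  apply choose_mono_of_le_half h2
  have h3 : 2 * n ≤ (L + 1) * n := by nlinarith
  rw [Nat.le_div_iff_mul_le (by norm_num)]
  omega
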